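/- For every integer n ≥ 2, the sum ∑ C_{r_1}·C_{r_2}·C_{r_3} over all triples (r_1,r_2,r_3) of nonnegative integers with r_1 ≥ 1, r_3 ≥ 1, r_2 ≥ 0 and r_1 + r_2 + r_3 = n − 1 equals C_{n+1} − 3·C_n + C_{n−1}. -/

import Mathlib

open Finset Finset.Nat

/-- Sum over 3-tuples with fixed sum equals a nested antidiagonal sum. -/
lemma tuple3_sum (m : ℕ) (f : ℕ → ℕ → ℕ → ℤ) :
    ∑ r ∈ Finset.Nat.antidiagonalTuple 3 m, f (r 0) (r 1) (r 2)
      = ∑ p ∈ Finset.HasAntidiagonal.antidiagonal m, ∑ q ∈ Finset.HasAntidiagonal.antidiagonal p.2, f p.1 q.1 q.2 := by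
  rw [← Finset.sum_sigma (Finset.HasAntidiagonal.antidiagonal m) (fun p => Finset.HasAntidiagonal.antidiagonal p.2)
      (fun x => f x.1.1 x.2.1 x.2.2)]
  refine Finset.sum_nbij' (fun r => ⟨(r 0, r 1 + r 2), (r 1, r 2)⟩)
    (fun x => ![x.1.1, x.2.1, x.2.2]) ?_ ?_ ?_ ?_ ?_
  · intro r hr
    rw [Finset.Nat.mem_antidiagonalTuple, Fin.sum_univ_three] at hr
    simp [Finset.mem_sigma, Finset.HasAntidiagonal.mem_antidiagonal, ← hr, add_assoc]
  · intro x hx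
    simp only [Finset.mem_sigma, Finset.HasAntidiagonal.mem_antidiagonal] at hx
    rw [Finset.Nat.mem_antidiagonalTuple, Fin.sum_univ_three]
    simp only [Matrix.cons_val_zero, Matrix.cons_val_one, Matrix.head_cons,
      Matrix.cons_val_two, Matrix.tail_cons]
    omega
  · intro r _
    funext i
    fin_cases i <;> rfl
  · intro x hx
    simp only [Finset.mem_sigma, Finset.HasAntidiagonal.mem_antidiagonal] at hx
    obtain ⟨⟨a, s⟩, b, c⟩ := x
    simp only at hx ⊢
    rw [Sigma.mk.inj_iff]
    simp [hx.2]
  · intro r _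
    rfl

lemma catalan_conv (m : ℕ) :
    ∑ p ∈ Finset.HasAntidiagonal.antidiagonal m, ((catalan p.1 : ℤ) * catalan p.2) = catalan (m + 1) := by
  rw [catalan_succ', Nat.cast_sum]
  simp

lemma catalan_conv' (m : ℕ) :
    ∑ p ∈ Finset.HasAntidiagonal.antidiagonal m, ((catalan p.1 : ℤ) * catalan (p.2 + 1))
      = (catalan (m + 2) : ℤ) - catalan (m + 1) := by
  have h := Finset.Nat.sum_antidiagonal_succ' (n := m)
    (f := fun p => (catalan p.1 : ℤ) * catalan p.2)
  rw [catalan_conv (m + 1)] at h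
  simp only [catalan_zero, Nat.cast_one, mul_one] at h
  linarith

lemma sum_if_fst (m : ℕ) (g : ℕ × ℕ → ℤ) :
    ∑ p ∈ Finset.HasAntidiagonal.antidiagonal m, (if 1 ≤ p.1 then g p else 0)
      = (∑ p ∈ Finset.HasAntidiagonal.antidiagonal m, g p) - g (0, m) := by
  have h0 : ∑ p ∈ Finset.HasAntidiagonal.antidiagonal m, (if p.1 = 0 then g p else 0) = g (0, m) := by
    rw [Finset.sum_eq_single_of_mem (0, m)]
    · simp
    · simp [Finset.HasAntidiagonal.mem_antidiagonal]
    · intro p hp hne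
      rw [Finset.HasAntidiagonal.mem_antidiagonal] at hp
      rw [if_neg]
      intro h1
      exact hne (by obtain ⟨a, b⟩ := p; simp_all)
  rw [← h0, ← Finset.sum_sub_distrib]
  refine Finset.sum_congr rfl fun p _ => ?_
  rcases Nat.eq_zero_or_pos p.1 with h | h
  · simp [h]
  · simp [h, Nat.pos_iff_ne_zero.mp h]

lemma sum_if_snd (m : ℕ) (g : ℕ × ℕ → ℤ) :
    ∑ p ∈ Finset.HasAntidiagonal.antidiagonal m, (if 1 ≤ p.2 then g p else 0)
      = (∑ p ∈ Finset.HasAntidiagonal.antidiagonal m, g p) - g (m, 0) := by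
  have h0 : ∑ p ∈ Finset.HasAntidiagonal.antidiagonal m, (if p.2 = 0 then g p else 0) = g (m, 0) := by
    rw [Finset.sum_eq_single_of_mem (m, 0)]
    · simp
    · simp [Finset.HasAntidiagonal.mem_antidiagonal]
    · intro p hp hne
      rw [Finset.HasAntidiagonal.mem_antidiagonal] at hp
      rw [if_neg]
      intro h1
      exact hne (by obtain ⟨a, b⟩ := p; simp_all)
  rw [← h0, ← Finset.sum_sub_distrib]
  refine Finset.sum_congr rfl fun p _ => ?_
  rcases Nat.eq_zero_or_pos p.2 with h | h
  · simp [h]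
  · simp [h, Nat.pos_iff_ne_zero.mp h]

/-- For every n ≥ 2, ∑ C_{r₁}C_{r₂}C_{r₃} over triples with r₁ ≥ 1, r₃ ≥ 1,
r₂ ≥ 0 and r₁+r₂+r₃ = n−1 equals C_{n+1} − 3·C_n + C_{n−1}. -/
theorem stmt_11 (n : ℕ) (hn : 2 ≤ n) :
    (∑ r ∈ (Finset.Nat.antidiagonalTuple 3 (n - 1)).filter (fun r => 1 ≤ r 0 ∧ 1 ≤ r 2),
        ∏ i, (catalan (r i) : ℤ)) =
      (catalan (n + 1) : ℤ) - 3 * catalan n + catalan (n - 1) := by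
  obtain ⟨m, rfl⟩ : ∃ m, n = m + 1 := ⟨n - 1, by omega⟩
  simp only [Nat.add_sub_cancel]
  rw [Finset.sum_filter]
  simp only [Fin.prod_univ_three]
  rw [tuple3_sum m (fun a b c =>
    if 1 ≤ a ∧ 1 ≤ c then (catalan a : ℤ) * catalan b * catalan c else 0)]
  have hinner : ∀ p ∈ Finset.HasAntidiagonal.antidiagonal m,
      (∑ q ∈ Finset.HasAntidiagonal.antidiagonal p.2,
        if 1 ≤ p.1 ∧ 1 ≤ q.2 then (catalan p.1 : ℤ) * catalan q.1 * catalan q.2 else 0)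
      = (if 1 ≤ p.1 then (catalan p.1 : ℤ) * (catalan (p.2 + 1) - catalan p.2) else 0) := by
    intro p _
    by_cases h : 1 ≤ p.1
    · simp only [h, true_and, if_true]
      rw [sum_if_snd p.2 (fun q => (catalan p.1 : ℤ) * catalan q.1 * catalan q.2)]
      simp only [catalan_zero, Nat.cast_one, mul_one]
      have : ∑ q ∈ Finset.HasAntidiagonal.antidiagonal p.2,
          (catalan p.1 : ℤ) * catalan q.1 * catalan q.2
          = (catalan p.1 : ℤ) * catalan (p.2 + 1) := by
        rw [← catalan_conv p.2, Finset.mul_sum]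
        exact Finset.sum_congr rfl fun q _ => by ring
      rw [this]
      ring
    · simp [h]
  rw [Finset.sum_congr rfl hinner,
    sum_if_fst m (fun p => (catalan p.1 : ℤ) * (catalan (p.2 + 1) - catalan p.2))]
  have hsplit : ∑ p ∈ Finset.HasAntidiagonal.antidiagonal m,
      (catalan p.1 : ℤ) * (catalan (p.2 + 1) - catalan p.2)
      = (catalan (m + 2) : ℤ) - 2 * catalan (m + 1) := by
    have h1 := catalan_conv' m
    have h2 := catalan_conv m
    calc ∑ p ∈ Finset.HasAntidiagonal.antidiagonal m,
        (catalan p.1 : ℤ) * (catalan (p.2 + 1) - catalan p.2)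
        = ∑ p ∈ Finset.HasAntidiagonal.antidiagonal m,
            ((catalan p.1 : ℤ) * catalan (p.2 + 1) - (catalan p.1 : ℤ) * catalan p.2) :=
          Finset.sum_congr rfl fun p _ => by ring
      _ = _ := by rw [Finset.sum_sub_distrib, h1, h2]; ring
  rw [hsplit]
  simp only [catalan_zero, Nat.cast_one, one_mul]
  ring
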